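/- (Proposition 4.2) Let n ≥ 2 and c ≥ 1. If (A₁,A₂;C₁,…,C_n;e;f₁,…,f_{n−1}) is a θ_c-semistable (c,c)-dimensional framed representation of Λ_n, then the pair (A₁,A₂) is a θ_c-semistable (c,c)-dimensional representation of the Kronecker quiver Q_K; that is, for every pair of subspaces S₀ ⊆ V₀, S₁ ⊆ V₁ with A₁(S₀) ⊆ S₁ and A₂(S₀) ⊆ S₁, with (S₀,S₁) ≠ (0,0) and (S₀,S₁) ≠ (V₀,V₁), one has (2c·dim S₀ + (1−2c)·dim S₁)/(dim S₀ + dim S₁) ≤ 1/2. -/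
import Mathlib
open Module Polynomial

set_option linter.unusedSectionVars false
set_option maxHeartbeats 1000000

namespace Stmt5



variable {M N P : Type} [AddCommGroup M] [Module ℂ M] [AddCommGroup N] [Module ℂ N]
  [AddCommGroup P] [Module ℂ P]

/-- linear map `λ ↦ ∑ k, λ k • w k` -/
noncomputable def tupMap (Nn : ℕ) (w : ℕ → M) : (Fin Nn → ℂ) →ₗ[ℂ] M :=
  ∑ k : Fin Nn, (LinearMap.proj k).smulRight (w k.1)

lemma tupMap_apply (Nn : ℕ) (w : ℕ → M) (lam : Fin Nn → ℂ) :
    tupMap Nn w lam = ∑ k : Fin Nn, lam k • w k.1 := by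
  simp [tupMap]

lemma tupMap_single (Nn : ℕ) (w : ℕ → M) (j : Fin Nn) :
    tupMap Nn w (Pi.single j 1) = w j.1 := by
  rw [tupMap_apply]
  rw [Finset.sum_eq_single j]
  · simp
  · intro k _ hk; simp [Pi.single_apply, hk]
  · intro h; exact absurd (Finset.mem_univ j) h

lemma tupMap_range (Nn : ℕ) (w : ℕ → M) (hw : ∀ k, Nn ≤ k → w k = 0) :
    LinearMap.range (tupMap Nn w) = Submodule.span ℂ (Set.range w) := by
  apply le_antisymm
  · rintro x ⟨lam, rfl⟩
    rw [tupMap_apply]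
    exact Submodule.sum_mem _ fun k _ =>
      Submodule.smul_mem _ _ (Submodule.subset_span ⟨k.1, rfl⟩)
  · rw [Submodule.span_le]
    rintro x ⟨k, rfl⟩
    by_cases hk : k < Nn
    · exact ⟨Pi.single ⟨k, hk⟩ 1, tupMap_single Nn w ⟨k, hk⟩⟩
    · rw [hw k (le_of_not_gt hk)]; exact Submodule.zero_mem _

lemma exists_ne_zero_map_eq_zero [FiniteDimensional ℂ M] [FiniteDimensional ℂ N]
    (φ : M →ₗ[ℂ] N) (h : finrank ℂ N < finrank ℂ M) : ∃ x, x ≠ 0 ∧ φ x = 0 := by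
  by_contra hco
  push_neg at hco
  have hinj : Function.Injective φ := by
    rw [← LinearMap.ker_eq_bot]
    rw [Submodule.eq_bot_iff]
    intro x hx
    by_contra hx0
    exact hco x hx0 hx
  exact absurd (LinearMap.finrank_le_finrank_of_injective hinj) (by omega)

/-- if `ker P ≤ ker Q` strictly (witnessed by x), ranks drop. -/
lemma rank_drop [FiniteDimensional ℂ M] [FiniteDimensional ℂ N] [FiniteDimensional ℂ P]
    (Pm : M →ₗ[ℂ] N) (Qm : M →ₗ[ℂ] P) (hker : LinearMap.ker Pm ≤ LinearMap.ker Qm)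
    (x : M) (hxP : Pm x ≠ 0) (hxQ : Qm x = 0) :
    finrank ℂ (LinearMap.range Qm) < finrank ℂ (LinearMap.range Pm) := by
  have hxmem : x ∈ LinearMap.ker Qm := LinearMap.mem_ker.mpr hxQ
  have hxnot : x ∉ LinearMap.ker Pm := fun hx => hxP (LinearMap.mem_ker.mp hx)
  have hlt : LinearMap.ker Pm < LinearMap.ker Qm :=
    lt_of_le_of_ne hker (fun hEq => hxnot (hEq ▸ hxmem))
  have h1 : finrank ℂ (LinearMap.ker Pm) < finrank ℂ (LinearMap.ker Qm) :=
    Submodule.finrank_lt_finrank_of_lt hlt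
  have h2 := LinearMap.finrank_range_add_finrank_ker Pm
  have h3 := LinearMap.finrank_range_add_finrank_ker Qm
  omega




/-- polynomial with prescribed low coefficients -/
noncomputable def polyOf (Nn : ℕ) (a : ℕ → ℂ) : ℂ[X] :=
  ∑ j ∈ Finset.range Nn, Polynomial.C (a j) * Polynomial.X ^ j

lemma polyOf_coeff (Nn : ℕ) (a : ℕ → ℂ) (i : ℕ) :
    (polyOf Nn a).coeff i = if i < Nn then a i else 0 := by
  rw [polyOf, Polynomial.finset_sum_coeff]
  simp only [Polynomial.coeff_C_mul, Polynomial.coeff_X_pow]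
  have : ∀ j ∈ Finset.range Nn, a j * (if i = j then (1:ℂ) else 0)
      = if i = j then a j else 0 := by
    intro j _; by_cases h : i = j <;> simp [h]
  rw [Finset.sum_congr rfl this, Finset.sum_ite_eq]
  simp [Finset.mem_range]

lemma polyOf_eval (Nn : ℕ) (a : ℕ → ℂ) (t : ℂ) :
    (polyOf Nn a).eval t = ∑ j ∈ Finset.range Nn, t ^ j * a j := by
  rw [polyOf, Polynomial.eval_finset_sum]
  apply Finset.sum_congr rfl
  intro j _
  rw [Polynomial.eval_mul, Polynomial.eval_C, Polynomial.eval_pow, Polynomial.eval_X]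
  ring

lemma polyOf_natDegree_lt (Nn : ℕ) (hN : 0 < Nn) (a : ℕ → ℂ) : (polyOf Nn a).natDegree < Nn := by
  have : (polyOf Nn a).natDegree ≤ Nn - 1 := by
    apply Polynomial.natDegree_sum_le_of_forall_le
    intro j hj
    exact le_trans (Polynomial.natDegree_C_mul_X_pow_le _ _) (by
      simp only [Finset.mem_range] at hj; omega)
  omega

/-- scalar Vandermonde-type vanishing -/
lemma vscal (Mn : ℕ) (x : Fin (Mn + 1) → ℂ) (hx : Function.Injective x) (a : ℕ → ℂ)
    (h : ∀ i, ∑ j ∈ Finset.range (Mn + 1), (x i) ^ j * a j = 0) :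
    ∀ j, j < Mn + 1 → a j = 0 := by
  have hp : polyOf (Mn + 1) a = 0 := by
    apply Polynomial.eq_zero_of_natDegree_lt_card_of_eval_eq_zero _ hx
    · intro i; rw [polyOf_eval]; exact h i
    · calc (polyOf (Mn+1) a).natDegree < Mn + 1 := polyOf_natDegree_lt _ (by omega) _
        _ = Fintype.card (Fin (Mn + 1)) := by simp
  intro j hj
  have := polyOf_coeff (Mn + 1) a j
  rw [hp] at this
  simpa [hj] using this.symm




variable {V₀ V₁ : Type} [AddCommGroup V₀] [Module ℂ V₀] [AddCommGroup V₁] [Module ℂ V₁]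

/-- a "column chain" for the pencil (A₂ + x A₁) -/
def IsCol (A₁ A₂ : V₀ →ₗ[ℂ] V₁) (v : ℕ → V₀) (D : ℕ) : Prop :=
  A₂ (v 0) = 0 ∧ (∀ k, A₂ (v (k+1)) = - A₁ (v k)) ∧ (∀ k, D < k → v k = 0)

lemma IsCol.top {A₁ A₂ : V₀ →ₗ[ℂ] V₁} {v : ℕ → V₀} {D : ℕ} (h : IsCol A₁ A₂ v D) :
    ∀ k, D ≤ k → A₁ (v k) = 0 := by
  intro k hk
  have h1 := h.2.1 k
  rw [h.2.2 (k+1) (by omega), map_zero] at h1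
  exact neg_eq_zero.mp h1.symm

/-- "row chains": functionals -/
def IsRow (A₁ A₂ : V₀ →ₗ[ℂ] V₁) (ρ : ℕ → (V₁ →ₗ[ℂ] ℂ)) (D : ℕ) : Prop :=
  (ρ 0).comp A₂ = 0 ∧ (∀ k, (ρ (k+1)).comp A₂ = - (ρ k).comp A₁) ∧ (∀ k, D < k → ρ k = 0)

lemma IsRow.top {A₁ A₂ : V₀ →ₗ[ℂ] V₁} {ρ : ℕ → (V₁ →ₗ[ℂ] ℂ)} {D : ℕ}
    (h : IsRow A₁ A₂ ρ D) : ∀ k, D ≤ k → (ρ k).comp A₁ = 0 := by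
  intro k hk
  have h1 := h.2.1 k
  rw [h.2.2 (k+1) (by omega)] at h1
  simpa using h1.symm

section exist

variable {M N : Type} [AddCommGroup M] [Module ℂ M] [AddCommGroup N] [Module ℂ N]
  [FiniteDimensional ℂ M] [FiniteDimensional ℂ N]

/-- zero-extension of a tuple to a sequence, as a linear map -/
noncomputable def extMap (Nn : ℕ) : (Fin Nn → M) →ₗ[ℂ] (ℕ → M) :=
  LinearMap.pi (fun i => if h : i < Nn then LinearMap.proj (⟨i, h⟩ : Fin Nn) else 0)

lemma extMap_apply_lt (Nn : ℕ) (v : Fin Nn → M) (i : ℕ) (h : i < Nn) :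
    extMap Nn v i = v ⟨i, h⟩ := by
  simp [extMap, LinearMap.pi_apply, dif_pos h]

lemma extMap_apply_ge (Nn : ℕ) (v : Fin Nn → M) (i : ℕ) (h : Nn ≤ i) :
    extMap Nn v i = 0 := by
  simp [extMap, LinearMap.pi_apply, dif_neg (by omega : ¬ i < Nn)]

/-- existence of a nonzero chain when the pencil has a dimension surplus -/
lemma col_exists_abstract (a₁ a₂ : M →ₗ[ℂ] N) (h : finrank ℂ N < finrank ℂ M) :
    ∃ w : ℕ → M, (a₂ (w 0) = 0 ∧ (∀ k, a₂ (w (k+1)) = - a₁ (w k)) ∧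
      (∀ k, finrank ℂ N < k → w k = 0)) ∧ w ≠ 0 := by
  set Nd := finrank ℂ N with hNd
  -- the chain-condition map
  set Φ : (Fin (Nd+1) → M) →ₗ[ℂ] (Fin (Nd+2) → N) :=
    LinearMap.pi (fun i =>
      a₂ ∘ₗ (LinearMap.proj (i.1 : ℕ)) ∘ₗ (extMap (Nd+1)) +
      (if i.1 = 0 then 0 else a₁ ∘ₗ (LinearMap.proj (i.1 - 1 : ℕ)) ∘ₗ (extMap (Nd+1)))) with hΦ
  have hdim : finrank ℂ (Fin (Nd+2) → N) < finrank ℂ (Fin (Nd+1) → M) := by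
    rw [Module.finrank_pi_fintype, Module.finrank_pi_fintype]
    simp only [Finset.sum_const, Finset.card_univ, Fintype.card_fin, smul_eq_mul]
    have h1 : finrank ℂ N + 1 ≤ finrank ℂ M := h
    nlinarith [h, hNd]
  obtain ⟨v, hvne, hv0⟩ := exists_ne_zero_map_eq_zero Φ hdim
  refine ⟨⇑(extMap (Nd+1) : (Fin (Nd+1) → M) →ₗ[ℂ] (ℕ → M)) v, ?_, ?_⟩
  · have hcomp : ∀ i : Fin (Nd+2), a₂ (extMap (Nd+1) v i.1) +
        (if i.1 = 0 then 0 else a₁ (extMap (Nd+1) v (i.1 - 1))) = 0 := by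
      intro i
      have := congrFun hv0 i
      rw [hΦ] at this
      simpa [LinearMap.pi_apply, LinearMap.add_apply, LinearMap.comp_apply,
        apply_ite (fun (φ : (Fin (Nd+1) → M) →ₗ[ℂ] N) => φ v)] using this
    refine ⟨?_, ?_, ?_⟩
    · have := hcomp ⟨0, by omega⟩
      simpa using this
    · intro k
      by_cases hk : k + 1 < Nd + 2
      · have := hcomp ⟨k+1, hk⟩
        simp only [Nat.add_sub_cancel, if_neg (by omega : ¬ k + 1 = 0)] at this
        exact eq_neg_of_add_eq_zero_left this
      · rw [extMap_apply_ge _ _ _ (by omega), extMap_apply_ge _ _ _ (by omega), map_zero, map_zero,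
          neg_zero]
    · intro k hk
      exact extMap_apply_ge _ _ _ (by omega)
  · intro hzero
    apply hvne
    funext j
    have := congrFun hzero j.1
    rwa [extMap_apply_lt _ _ _ j.2, Pi.zero_apply] at this

end exist

section rowstuff
variable {V₀ V₁ : Type} [AddCommGroup V₀] [Module ℂ V₀] [FiniteDimensional ℂ V₀]
  [AddCommGroup V₁] [Module ℂ V₁] [FiniteDimensional ℂ V₁]
variable {c : ℕ} {A₁ A₂ : V₀ →ₗ[ℂ] V₁}

-- evaluation of the chain as a vector polynomial
lemma col_eval_ker (v : ℕ → V₀) (d : ℕ) (hv : IsCol A₁ A₂ v d) (t : ℂ) :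
    A₂ (∑ k ∈ Finset.range (d+1), t^k • v k) + t • A₁ (∑ k ∈ Finset.range (d+1), t^k • v k)
      = 0 := by
  have htop : A₁ (v d) = 0 := by
    have h1 := hv.2.1 d
    rw [hv.2.2 (d+1) (by omega), map_zero] at h1
    exact neg_eq_zero.mp h1.symm
  rw [map_sum, map_sum, Finset.smul_sum]
  have e1 : ∀ k, A₂ (t^k • v k) = t^k • A₂ (v k) := fun k => map_smul _ _ _
  have e2 : ∑ k ∈ Finset.range (d+1), A₂ (t^k • v k)
      = ∑ k ∈ Finset.range d, t^(k+1) • (- A₁ (v k)) := by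
    rw [Finset.sum_range_succ']
    simp only [e1, pow_zero, one_smul, hv.1, add_zero]
    apply Finset.sum_congr rfl
    intro k _
    rw [hv.2.1 k]
  have e3 : ∑ k ∈ Finset.range (d+1), t • A₁ (t^k • v k)
      = ∑ k ∈ Finset.range d, t^(k+1) • A₁ (v k) := by
    rw [Finset.sum_range_succ]
    have : ∀ k, t • A₁ (t^k • v k) = t^(k+1) • A₁ (v k) := by
      intro k
      rw [map_smul, smul_smul, pow_succ, mul_comm]
    simp only [this, htop, smul_zero, add_zero]
  rw [e2, e3, ← Finset.sum_add_distrib]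
  apply Finset.sum_eq_zero
  intro k _
  rw [smul_neg, neg_add_cancel]

/-- existence of a nonzero row chain given a nonzero column chain (square pencil). -/
lemma row_exists (hc : 1 ≤ c) (hV₀ : finrank ℂ V₀ = c) (hV₁ : finrank ℂ V₁ = c)
    (v : ℕ → V₀) (d : ℕ) (hv : IsCol A₁ A₂ v d) (hvne : v ≠ 0) :
    ∃ ρ : ℕ → (V₁ →ₗ[ℂ] ℂ), IsRow A₁ A₂ ρ (c - 1) ∧ ρ ≠ 0 := by
  -- a point set where the evaluated chain is nonzero
  obtain ⟨ks, hks⟩ : ∃ k, v k ≠ 0 := by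
    by_contra hco; push_neg at hco; exact hvne (funext hco)
  have hksd : ks ≤ d := by
    by_contra hgt; exact hks (hv.2.2 ks (by omega))
  obtain ⟨ξ, hξ⟩ : ∃ ξ : Module.Dual ℂ V₀, ξ (v ks) ≠ 0 := by
    by_contra hco; push_neg at hco
    exact hks ((Module.forall_dual_apply_eq_zero_iff ℂ (v ks)).mp hco)
  set p : ℂ[X] := polyOf (d+1) (fun k => ξ (v k)) with hp
  have hpne : p ≠ 0 := by
    intro h0
    have := polyOf_coeff (d+1) (fun k => ξ (v k)) ks
    rw [hp] at h0
    rw [h0] at this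
    simp only [Polynomial.coeff_zero] at this
    rw [if_pos (by omega)] at this
    exact hξ this.symm
  have hroots : Set.Finite {x : ℂ | p.IsRoot x} := Polynomial.finite_setOf_isRoot hpne
  have hinf : (Set.univ \ {x : ℂ | p.IsRoot x}).Infinite :=
    Set.infinite_univ.diff hroots
  set emb := hinf.natEmbedding with hemb
  set xs : Fin (c+1) → ℂ := fun i => (emb i.1).1 with hxs
  have hxs_inj : Function.Injective xs := by
    intro a b hab
    have h2 := emb.injective (Subtype.ext hab)
    exact Fin.ext h2
  have hxs_ne : ∀ i, p.eval (xs i) ≠ 0 := by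
    intro i
    have h2 := (emb i.1).2
    simp only [Set.mem_diff, Set.mem_setOf_eq, Polynomial.IsRoot.def] at h2
    exact h2.2
  -- the evaluated chain vectors
  set vE : ℂ → V₀ := fun t => ∑ k ∈ Finset.range (d+1), t^k • v k with hvE
  have hpoly_eval : ∀ t, p.eval t = ξ (vE t) := by
    intro t
    rw [hp, hvE, polyOf, Polynomial.eval_finset_sum, map_sum]
    apply Finset.sum_congr rfl
    intro j _
    rw [Polynomial.eval_mul, Polynomial.eval_C, Polynomial.eval_pow, Polynomial.eval_X,
      map_smul, smul_eq_mul, mul_comm]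
  have hvE_ne : ∀ i, vE (xs i) ≠ 0 := by
    intro i h0
    apply hxs_ne i
    rw [hpoly_eval, h0, map_zero]
  set B : Fin (c+1) → (V₀ →ₗ[ℂ] V₁) := fun i => A₂ + xs i • A₁ with hB
  have hBvE : ∀ i, (B i) (vE (xs i)) = 0 := by
    intro i
    rw [hB]
    simp only [LinearMap.add_apply, LinearMap.smul_apply]
    exact col_eval_ker v d hv (xs i)
  have hrank : ∀ i, finrank ℂ (LinearMap.range ((B i).dualMap)) ≤ c - 1 := by
    intro i
    rw [LinearMap.finrank_range_dualMap_eq_finrank_range]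
    have h1 := LinearMap.finrank_range_add_finrank_ker (B i)
    rw [hV₀] at h1
    have hker : finrank ℂ (LinearMap.ker (B i)) ≠ 0 := by
      intro h0
      have : LinearMap.ker (B i) = ⊥ := Submodule.finrank_eq_zero.mp h0
      have hmem : vE (xs i) ∈ LinearMap.ker (B i) := LinearMap.mem_ker.mpr (hBvE i)
      rw [this, Submodule.mem_bot] at hmem
      exact hvE_ne i hmem
    omega
  set Rg : Fin (c+1) → Submodule ℂ (Module.Dual ℂ V₀) :=
    fun i => LinearMap.range ((B i).dualMap) with hRg
  set evalmap : Fin (c+1) → ((Fin c → (V₁ →ₗ[ℂ] ℂ)) →ₗ[ℂ] (V₁ →ₗ[ℂ] ℂ)) :=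
    fun i => ∑ j : Fin c, (xs i)^(j.1) • LinearMap.proj j with hevalmap
  set Θ : (Fin c → (V₁ →ₗ[ℂ] ℂ)) →ₗ[ℂ] (Π i : Fin (c+1), Rg i) :=
    LinearMap.pi (fun i => LinearMap.codRestrict (Rg i) (((B i).dualMap).comp (evalmap i))
      (fun ρ => LinearMap.mem_range_self _ _)) with hΘ
  have hdom : finrank ℂ (Fin c → (V₁ →ₗ[ℂ] ℂ)) = c * c := by
    rw [Module.finrank_pi_fintype]
    have : finrank ℂ (V₁ →ₗ[ℂ] ℂ) = c := by
      rw [← hV₁]; exact Subspace.dual_finrank_eq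
    simp [this, Finset.sum_const, mul_comm]
  have hcod : finrank ℂ (Π i : Fin (c+1), Rg i) < c * c := by
    rw [Module.finrank_pi_fintype]
    have hle : ∑ i : Fin (c+1), finrank ℂ (Rg i) ≤ (c+1) * (c-1) := by
      calc ∑ i : Fin (c+1), finrank ℂ (Rg i) ≤ ∑ _i : Fin (c+1), (c-1) :=
            Finset.sum_le_sum (fun i _ => hrank i)
        _ = (c+1) * (c-1) := by simp [Finset.sum_const, mul_comm]
    have hlt : (c+1) * (c-1) < c * c := by
      obtain ⟨k, rfl⟩ : ∃ k, c = k + 1 := ⟨c - 1, by omega⟩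
      simp only [Nat.add_sub_cancel]
      nlinarith
    omega
  obtain ⟨rho, hrhone, hrho0⟩ := exists_ne_zero_map_eq_zero Θ (by rw [hdom]; exact hcod)
  have hcomp : ∀ (i : Fin (c+1)) (z : V₀), (evalmap i rho) ((B i) z) = 0 := by
    intro i z
    have h2 := congrFun hrho0 i
    rw [hΘ] at h2
    have h3 : ((B i).dualMap).comp (evalmap i) rho = 0 := by
      have := congrArg Subtype.val h2
      simpa [LinearMap.pi_apply, LinearMap.codRestrict] using this
    have h4 : (B i).dualMap (evalmap i rho) = 0 := by
      simpa [LinearMap.comp_apply] using h3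
    have h5 := LinearMap.congr_fun h4 z
    rw [LinearMap.dualMap_apply] at h5
    simpa using h5
  set lt : ℕ → (V₁ →ₗ[ℂ] ℂ) := fun j => if h : j < c then rho ⟨j, h⟩ else 0 with hlt
  have hval : ∀ (z : V₀) (i : Fin (c+1)),
      ∑ j ∈ Finset.range (c+1), (xs i)^j *
        ((lt j) (A₂ z) + (if j = 0 then 0 else (lt (j-1)) (A₁ z))) = 0 := by
    intro z i
    have h2 := hcomp i z
    rw [hevalmap] at h2
    simp only [LinearMap.sum_apply, LinearMap.smul_apply, LinearMap.proj_apply,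
      smul_eq_mul] at h2
    -- h2 : ∑ j : Fin c, xs i ^ j.1 * (rho j) ((B i) z) = 0
    have hBz : ∀ j : Fin c, (rho j) ((B i) z) = (rho j) (A₂ z) + (xs i) * (rho j) (A₁ z) := by
      intro j
      rw [hB]
      simp only [LinearMap.add_apply, LinearMap.smul_apply, map_add, map_smul, smul_eq_mul]
    rw [Finset.sum_congr rfl (fun j _ => by rw [hBz j])] at h2
    have hsplit : ∑ j ∈ Finset.range (c+1), (xs i)^j *
        ((lt j) (A₂ z) + (if j = 0 then 0 else (lt (j-1)) (A₁ z)))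
        = (∑ j ∈ Finset.range (c+1), (xs i)^j * (lt j) (A₂ z))
          + ∑ j ∈ Finset.range (c+1), (xs i)^j *
              (if j = 0 then 0 else (lt (j-1)) (A₁ z)) := by
      rw [← Finset.sum_add_distrib]
      apply Finset.sum_congr rfl
      intro j _
      ring
    rw [hsplit]
    have hfirst : ∑ j ∈ Finset.range (c+1), (xs i)^j * (lt j) (A₂ z)
        = ∑ j ∈ Finset.range c, (xs i)^j * (lt j) (A₂ z) := by
      rw [Finset.sum_range_succ]
      rw [hlt]
      simp only [dif_neg (lt_irrefl c)]
      simp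
    have hsecond : ∑ j ∈ Finset.range (c+1), (xs i)^j *
        (if j = 0 then 0 else (lt (j-1)) (A₁ z))
        = ∑ j ∈ Finset.range c, (xs i)^(j+1) * (lt j) (A₁ z) := by
      rw [Finset.sum_range_succ']
      simp only [if_pos rfl, if_true, mul_zero, add_zero]
      apply Finset.sum_congr rfl
      intro j _
      rw [if_neg (by omega : ¬ j + 1 = 0), Nat.add_sub_cancel]
    rw [hfirst, hsecond]
    have hfin1 : ∑ j ∈ Finset.range c, (xs i)^j * (lt j) (A₂ z)
        = ∑ j : Fin c, (xs i)^(j.1) * (rho j) (A₂ z) := by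
      rw [← Fin.sum_univ_eq_sum_range (fun j => (xs i)^j * (lt j) (A₂ z)) c]
      apply Finset.sum_congr rfl
      intro j _
      rw [hlt]
      simp only [dif_pos j.2]
    have hfin2 : ∑ j ∈ Finset.range c, (xs i)^(j+1) * (lt j) (A₁ z)
        = ∑ j : Fin c, (xs i)^(j.1+1) * (rho j) (A₁ z) := by
      rw [← Fin.sum_univ_eq_sum_range (fun j => (xs i)^(j+1) * (lt j) (A₁ z)) c]
      apply Finset.sum_congr rfl
      intro j _
      rw [hlt]
      simp only [dif_pos j.2]
    rw [hfin1, hfin2, ← h2, ← Finset.sum_add_distrib]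
    apply Finset.sum_congr rfl
    intro j _
    ring
  have hσ : ∀ (z : V₀) (j : ℕ), j < c + 1 →
      (lt j) (A₂ z) + (if j = 0 then 0 else (lt (j-1)) (A₁ z)) = 0 := by
    intro z j hj
    exact vscal c xs hxs_inj _ (hval z) j hj
  refine ⟨lt, ⟨?_, ?_, ?_⟩, ?_⟩
  · apply LinearMap.ext
    intro z
    have := hσ z 0 (by omega)
    simpa using this
  · intro k
    apply LinearMap.ext
    intro z
    by_cases hk : k + 1 < c + 1
    · have := hσ z (k+1) hk
      rw [if_neg (by omega : ¬ k + 1 = 0), Nat.add_sub_cancel] at this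
      simp only [LinearMap.comp_apply, LinearMap.neg_apply]
      exact eq_neg_of_add_eq_zero_left this
    · rw [hlt]
      simp only [LinearMap.comp_apply, LinearMap.neg_apply]
      rw [dif_neg (by omega : ¬ k + 1 < c), dif_neg (by omega : ¬ k < c)]
      simp
  · intro k hk
    rw [hlt]
    exact dif_neg (by omega)
  · intro h0
    apply hrhone
    funext j
    have h9 := congrFun h0 j.1
    simp only [hlt] at h9
    rw [dif_pos j.2] at h9
    exact h9


end rowstuff

section main
variable {V₀ V₁ W : Type} [AddCommGroup V₀] [Module ℂ V₀] [FiniteDimensional ℂ V₀]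
  [AddCommGroup V₁] [Module ℂ V₁] [FiniteDimensional ℂ V₁]
  [AddCommGroup W] [Module ℂ W] [FiniteDimensional ℂ W]
variable {n c : ℕ}
variable {A₁ A₂ : V₀ →ₗ[ℂ] V₁} {C : Fin n → (V₁ →ₗ[ℂ] V₀)} {e : V₀ →ₗ[ℂ] W}
  {f : Fin (n - 1) → (W →ₗ[ℂ] V₀)}

/-- Claim 1 : every Λ-subrepresentation (T₀,T₁) satisfies dim T₀ ≤ dim T₁. -/
lemma claim1 (hc : 1 ≤ c) (hW : finrank ℂ W = 1)
    (hQ1b : ∀ q : Fin (n - 1),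
      C ⟨q.1 + 1, by have := q.2; omega⟩ ∘ₗ A₂ =
        C ⟨q.1, by have := q.2; omega⟩ ∘ₗ A₁ + f q ∘ₗ e)
    (hss : ∀ (S₀ : Submodule ℂ V₀) (S₁ : Submodule ℂ V₁),
      S₀.map A₁ ≤ S₁ → S₀.map A₂ ≤ S₁ →
      (∀ q : Fin n, S₁.map (C q) ≤ S₀) →
      ((S₀ ≤ LinearMap.ker e →
          (2 * c : ℤ) * (finrank ℂ S₀ : ℤ) + (1 - 2 * c) * (finrank ℂ S₁ : ℤ) ≤ 0) ∧
       ((∀ q, LinearMap.range (f q) ≤ S₀) →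
          (2 * c : ℤ) * (finrank ℂ S₀ : ℤ) + (1 - 2 * c) * (finrank ℂ S₁ : ℤ) ≤ c)))
    (T₀ : Submodule ℂ V₀) (T₁ : Submodule ℂ V₁)
    (h1 : T₀.map A₁ ≤ T₁) (h2 : T₀.map A₂ ≤ T₁) (hC : ∀ q, T₁.map (C q) ≤ T₀) :
    finrank ℂ T₀ ≤ finrank ℂ T₁ := by
  obtain ⟨hi, hii⟩ := hss T₀ T₁ h1 h2 hC
  by_contra hlt
  push_neg at hlt
  have hcast : (finrank ℂ T₁ : ℤ) + 1 ≤ (finrank ℂ T₀ : ℤ) := by exact_mod_cast hlt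
  have hc' : (1 : ℤ) ≤ (c : ℤ) := by exact_mod_cast hc
  have hT₁ : (0 : ℤ) ≤ (finrank ℂ T₁ : ℤ) := Int.natCast_nonneg _
  by_cases he : T₀ ≤ LinearMap.ker e
  · have := hi he
    nlinarith [this, hcast, hc', hT₁]
  · have hex : ∃ x ∈ T₀, e x ≠ 0 := by
      by_contra hco
      push_neg at hco
      exact he (fun x hx => LinearMap.mem_ker.mpr (hco x hx))
    obtain ⟨x, hxT, hex0⟩ := hex
    have hspan : ∀ u : W, ∃ μ : ℂ, μ • (e x) = u :=
      (finrank_eq_one_iff_of_nonzero' (e x) hex0).mp hW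
    have hf : ∀ q, LinearMap.range (f q) ≤ T₀ := by
      intro q w hw
      obtain ⟨u, rfl⟩ := hw
      obtain ⟨μ, hμ⟩ := hspan u
      have hrel := LinearMap.congr_fun (hQ1b q) x
      simp only [LinearMap.coe_comp, Function.comp_apply, LinearMap.add_apply] at hrel
      -- hrel : C ⟨q+1⟩ (A₂ x) = C ⟨q⟩ (A₁ x) + f q (e x)
      have hfe : f q (e x) = C ⟨q.1 + 1, by have := q.2; omega⟩ (A₂ x)
          - C ⟨q.1, by have := q.2; omega⟩ (A₁ x) := by
        rw [hrel]; abel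
      have hm1 : C ⟨q.1 + 1, by have := q.2; omega⟩ (A₂ x) ∈ T₀ :=
        hC _ (Submodule.mem_map_of_mem (h2 (Submodule.mem_map_of_mem hxT)))
      have hm2 : C ⟨q.1, by have := q.2; omega⟩ (A₁ x) ∈ T₀ :=
        hC _ (Submodule.mem_map_of_mem (h1 (Submodule.mem_map_of_mem hxT)))
      have : f q u = μ • (f q (e x)) := by rw [← hμ, map_smul]
      rw [this, hfe]
      exact Submodule.smul_mem _ _ (Submodule.sub_mem _ hm1 hm2)
    have hfin := hii hf
    clear he hex0 hxT hspan hf hi hii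
    nlinarith [hfin, hcast, hc', hT₁]

end main

section colcontra
variable {V₀ V₁ W : Type} [AddCommGroup V₀] [Module ℂ V₀] [FiniteDimensional ℂ V₀]
  [AddCommGroup V₁] [Module ℂ V₁] [FiniteDimensional ℂ V₁]
  [AddCommGroup W] [Module ℂ W] [FiniteDimensional ℂ W]
variable {n : ℕ}
variable {A₁ A₂ : V₀ →ₗ[ℂ] V₁} {C : Fin n → (V₁ →ₗ[ℂ] V₀)} {e : V₀ →ₗ[ℂ] W}
  {f : Fin (n - 1) → (W →ₗ[ℂ] V₀)}

/-- pointwise forms of the relations at the top indices -/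
lemma rel_ab (hn : 2 ≤ n)
    (hQ1b : ∀ q : Fin (n - 1),
      C ⟨q.1 + 1, by have := q.2; omega⟩ ∘ₗ A₂ =
        C ⟨q.1, by have := q.2; omega⟩ ∘ₗ A₁ + f q ∘ₗ e) (x : V₀) :
    C ⟨n-1, by omega⟩ (A₂ x) = C ⟨n-2, by omega⟩ (A₁ x) + f ⟨n-2, by omega⟩ (e x) := by
  have h := LinearMap.congr_fun (hQ1b ⟨n-2, by omega⟩) x
  simp only [LinearMap.coe_comp, Function.comp_apply, LinearMap.add_apply] at h
  have hidx : ((⟨n-2+1, by omega⟩ : Fin n)) = (⟨n-1, by omega⟩ : Fin n) := Fin.ext (by simp; omega)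
  rw [hidx] at h
  exact h

lemma rel_aa (hn : 2 ≤ n)
    (hQ1a : ∀ q : Fin (n - 1),
      A₂ ∘ₗ C ⟨q.1 + 1, by have := q.2; omega⟩ = A₁ ∘ₗ C ⟨q.1, by have := q.2; omega⟩)
    (y : V₁) :
    A₂ (C ⟨n-1, by omega⟩ y) = A₁ (C ⟨n-2, by omega⟩ y) := by
  have h := LinearMap.congr_fun (hQ1a ⟨n-2, by omega⟩) y
  simp only [LinearMap.coe_comp, Function.comp_apply] at h
  have hidx : ((⟨n-2+1, by omega⟩ : Fin n)) = (⟨n-1, by omega⟩ : Fin n) := Fin.ext (by simp; omega)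
  rw [hidx] at h
  exact h

/-- general pointwise relation for all middle indices -/
lemma rel_ab' (hQ1b : ∀ q : Fin (n - 1),
      C ⟨q.1 + 1, by have := q.2; omega⟩ ∘ₗ A₂ =
        C ⟨q.1, by have := q.2; omega⟩ ∘ₗ A₁ + f q ∘ₗ e)
    (q : ℕ) (hq : q < n - 1) (x : V₀) :
    C ⟨q + 1, by omega⟩ (A₂ x) = C ⟨q, by omega⟩ (A₁ x) + f ⟨q, hq⟩ (e x) := by
  have h := LinearMap.congr_fun (hQ1b ⟨q, hq⟩) x
  simp only [LinearMap.coe_comp, Function.comp_apply, LinearMap.add_apply] at h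
  exact h

lemma rel_aa' (hQ1a : ∀ q : Fin (n - 1),
      A₂ ∘ₗ C ⟨q.1 + 1, by have := q.2; omega⟩ = A₁ ∘ₗ C ⟨q.1, by have := q.2; omega⟩)
    (q : ℕ) (hq : q < n - 1) (y : V₁) :
    A₂ (C ⟨q + 1, by omega⟩ y) = A₁ (C ⟨q, by omega⟩ y) := by
  have h := LinearMap.congr_fun (hQ1a ⟨q, hq⟩) y
  simp only [LinearMap.coe_comp, Function.comp_apply] at h
  exact h

/-- bottom coefficient of a minimal column chain is nonzero -/
lemma col_min_bottom (v : ℕ → V₀) (d : ℕ) (hv : IsCol A₁ A₂ v d) (hvne : v ≠ 0)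
    (hmin : ∀ (D : ℕ) (w : ℕ → V₀), IsCol A₁ A₂ w D → w ≠ 0 → d ≤ D) :
    v 0 ≠ 0 := by
  intro h0
  rcases Nat.eq_zero_or_pos d with hd | hd
  · apply hvne
    funext k
    rcases Nat.eq_zero_or_pos k with hk | hk
    · rw [hk]; exact h0
    · exact hv.2.2 k (by omega)
  · set w : ℕ → V₀ := fun k => v (k+1) with hw
    have hwchain : IsCol A₁ A₂ w (d-1) := by
      refine ⟨?_, ?_, ?_⟩
      · show A₂ (v 1) = 0
        rw [hv.2.1 0, h0, map_zero, neg_zero]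
      · intro k; exact hv.2.1 (k+1)
      · intro k hk; exact hv.2.2 (k+1) (by omega)
    have hwne : w ≠ 0 := by
      intro hw0
      apply hvne
      funext k
      rcases Nat.eq_zero_or_pos k with hk | hk
      · rw [hk]; exact h0
      · have := congrFun hw0 (k-1)
        rw [hw] at this
        simpa [Nat.sub_add_cancel hk] using this
    have := hmin (d-1) w hwchain hwne
    omega

/-- top coefficient of a minimal row chain is nonzero -/
lemma row_min_top (ρ : ℕ → (V₁ →ₗ[ℂ] ℂ)) (δ : ℕ) (hρ : IsRow A₁ A₂ ρ δ) (hρne : ρ ≠ 0)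
    (hmin : ∀ (D : ℕ) (w : ℕ → (V₁ →ₗ[ℂ] ℂ)), IsRow A₁ A₂ w D → w ≠ 0 → δ ≤ D) :
    ρ δ ≠ 0 := by
  intro h0
  rcases Nat.eq_zero_or_pos δ with hd | hd
  · apply hρne
    funext k
    rcases Nat.eq_zero_or_pos k with hk | hk
    · rw [hk, ← hd]; exact h0
    · exact hρ.2.2 k (by omega)
  · have hρ' : IsRow A₁ A₂ ρ (δ-1) := by
      refine ⟨hρ.1, hρ.2.1, ?_⟩
      intro k hk
      rcases Nat.lt_or_ge δ k with h | h
      · exact hρ.2.2 k h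
      · have : k = δ := by omega
        rw [this]; exact h0
    have := hmin (δ-1) ρ hρ' hρne
    omega

end colcontra

section colcontra2
variable {V₀ V₁ W : Type} [AddCommGroup V₀] [Module ℂ V₀] [FiniteDimensional ℂ V₀]
  [AddCommGroup V₁] [Module ℂ V₁] [FiniteDimensional ℂ V₁]
  [AddCommGroup W] [Module ℂ W] [FiniteDimensional ℂ W]
variable {n : ℕ}
variable {A₁ A₂ : V₀ →ₗ[ℂ] V₁} {C : Fin n → (V₁ →ₗ[ℂ] V₀)} {e : V₀ →ₗ[ℂ] W}
  {f : Fin (n - 1) → (W →ₗ[ℂ] V₀)}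

/-- the column-chain case with all `e`-values zero leads to a contradiction -/
lemma col_contra (hn : 2 ≤ n)
    (hQ1a : ∀ q : Fin (n - 1),
      A₂ ∘ₗ C ⟨q.1 + 1, by have := q.2; omega⟩ = A₁ ∘ₗ C ⟨q.1, by have := q.2; omega⟩)
    (hQ1b : ∀ q : Fin (n - 1),
      C ⟨q.1 + 1, by have := q.2; omega⟩ ∘ₗ A₂ =
        C ⟨q.1, by have := q.2; omega⟩ ∘ₗ A₁ + f q ∘ₗ e)
    (hclaim : ∀ (T₀ : Submodule ℂ V₀) (T₁ : Submodule ℂ V₁),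
      T₀.map A₁ ≤ T₁ → T₀.map A₂ ≤ T₁ → (∀ q, T₁.map (C q) ≤ T₀) →
        finrank ℂ T₀ ≤ finrank ℂ T₁)
    (v : ℕ → V₀) (d : ℕ) (hv : IsCol A₁ A₂ v d) (hvne : v ≠ 0)
    (hmin : ∀ (D : ℕ) (w : ℕ → V₀), IsCol A₁ A₂ w D → w ≠ 0 → d ≤ D)
    (hη : ∀ k, e (v k) = 0) : False := by
  have htop : ∀ k, d ≤ k → A₁ (v k) = 0 := IsCol.top hv
  set Cn : V₁ →ₗ[ℂ] V₀ := C ⟨n-1, by omega⟩ with hCn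
  set Cn' : V₁ →ₗ[ℂ] V₀ := C ⟨n-2, by omega⟩ with hCn'
  set z : ℕ → V₀ := fun k => Cn (A₁ (v k)) with hz
  -- z is a chain
  have hzc1 : ∀ k, Cn' (A₁ (v k)) = Cn (A₂ (v k)) := by
    intro k
    have := rel_ab hn hQ1b (v k)
    rw [hη k, map_zero, add_zero] at this
    exact this.symm
  have hzchain0 : A₂ (z 0) = 0 := by
    rw [hz]
    show A₂ (Cn (A₁ (v 0))) = 0
    rw [rel_aa hn hQ1a (A₁ (v 0)), ← hCn']
    rw [hzc1 0, hv.1, map_zero, map_zero]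
  have hzchainstep : ∀ k, A₂ (z (k+1)) = - A₁ (z k) := by
    intro k
    show A₂ (Cn (A₁ (v (k+1)))) = - A₁ (Cn (A₁ (v k)))
    rw [rel_aa hn hQ1a (A₁ (v (k+1))), ← hCn']
    rw [hzc1 (k+1), hv.2.1 k, map_neg, map_neg]
  have hzbound : ∀ k, d - 1 < k → z k = 0 := by
    intro k hk
    rcases Nat.lt_or_ge k d with h | h
    · -- then d = 0 impossible unless... k > d-1 and k < d means d ≥ 1 and k = d-1 contradiction
      omega
    · rw [hz]
      show Cn (A₁ (v k)) = 0
      rw [htop k h, map_zero]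
  have hz0 : ∀ k, z k = 0 := by
    by_cases hd : d = 0
    · intro k
      rw [hz]
      show Cn (A₁ (v k)) = 0
      rw [htop k (by omega), map_zero]
    · by_contra hco
      push_neg at hco
      obtain ⟨k, hk⟩ := hco
      have hzne : z ≠ 0 := fun h => hk (congrFun h k)
      have := hmin (d-1) z ⟨hzchain0, hzchainstep, hzbound⟩ hzne
      omega
  -- full vanishing of all C-images
  have hvan : ∀ k, (∀ q : Fin n, C q (A₂ (v k)) = 0) ∧ (∀ q : Fin n, C q (A₁ (v k)) = 0) := by
    have hA1part : ∀ k, (∀ q : Fin n, C q (A₂ (v k)) = 0) → ∀ q : Fin n, C q (A₁ (v k)) = 0 := by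
      intro k h2 q
      by_cases hq : q.1 = n - 1
      · have hqe : q = (⟨n-1, by omega⟩ : Fin n) := Fin.ext (by simp only [Fin.val_mk]; omega)
        rw [hqe]
        exact hz0 k
      · have hq' : q.1 < n - 1 := by have := q.2; omega
        have hrel := rel_ab' hQ1b q.1 hq' (v k)
        rw [hη k, map_zero, add_zero] at hrel
        have h20 := h2 ⟨q.1+1, by omega⟩
        rw [h20] at hrel
        have hqe : (⟨q.1, by omega⟩ : Fin n) = q := Fin.ext rfl
        rw [hqe] at hrel
        exact hrel.symm
    intro k
    induction k with
    | zero =>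
      have h2 : ∀ q : Fin n, C q (A₂ (v 0)) = 0 := by
        intro q; rw [hv.1, map_zero]
      exact ⟨h2, hA1part 0 h2⟩
    | succ k ih =>
      have h2 : ∀ q : Fin n, C q (A₂ (v (k+1))) = 0 := by
        intro q
        rw [hv.2.1 k, map_neg, ih.2 q, neg_zero]
      exact ⟨h2, hA1part (k+1) h2⟩
  -- the subrepresentation
  set T₀ : Submodule ℂ V₀ := Submodule.span ℂ (Set.range v) with hT₀
  set T₁ : Submodule ℂ V₁ := T₀.map A₂ with hT₁
  have hmapA1 : T₀.map A₁ ≤ T₁ := by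
    rw [hT₀, Submodule.map_span, Submodule.span_le]
    rintro y ⟨x, ⟨k, rfl⟩, rfl⟩
    have : A₁ (v k) = A₂ (-(v (k+1))) := by
      rw [map_neg, hv.2.1 k, neg_neg]
    rw [this]
    exact Submodule.mem_map_of_mem
      (Submodule.neg_mem _ (Submodule.subset_span ⟨k+1, rfl⟩))
  have hmapC : ∀ q : Fin n, T₁.map (C q) ≤ T₀ := by
    intro q
    rw [hT₁, hT₀, Submodule.map_span, Submodule.map_span, Submodule.span_le]
    rintro y ⟨x, ⟨x', ⟨k, rfl⟩, rfl⟩, rfl⟩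
    rw [(hvan k).1 q]
    exact Submodule.zero_mem _
  have hfr := hclaim T₀ T₁ hmapA1 le_rfl hmapC
  -- dimension comparison
  set P : (Fin (d+1) → ℂ) →ₗ[ℂ] V₀ := tupMap (d+1) v with hP
  set Q : (Fin (d+1) → ℂ) →ₗ[ℂ] V₁ := A₂ ∘ₗ P with hQ
  have hrangeP : LinearMap.range P = T₀ := by
    rw [hP, tupMap_range (d+1) v (fun k hk => hv.2.2 k (by omega)), hT₀]
  have hrangeQ : LinearMap.range Q = T₁ := by
    rw [hQ, LinearMap.range_comp, hrangeP, hT₁]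
  have hker : LinearMap.ker P ≤ LinearMap.ker Q := by
    intro x hx
    rw [LinearMap.mem_ker] at hx ⊢
    rw [hQ, LinearMap.comp_apply, hx, map_zero]
  have hwitP : P (Pi.single (⟨0, by omega⟩ : Fin (d+1)) 1) ≠ 0 := by
    rw [hP, tupMap_single]
    exact col_min_bottom v d hv hvne hmin
  have hwitQ : Q (Pi.single (⟨0, by omega⟩ : Fin (d+1)) 1) = 0 := by
    rw [hQ, LinearMap.comp_apply, hP, tupMap_single]
    exact hv.1
  have hdrop := rank_drop P Q hker _ hwitP hwitQ
  rw [hrangeP, hrangeQ] at hdrop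
  omega

end colcontra2

section pairing
variable {V₀ V₁ W : Type} [AddCommGroup V₀] [Module ℂ V₀] [FiniteDimensional ℂ V₀]
  [AddCommGroup V₁] [Module ℂ V₁] [FiniteDimensional ℂ V₁]
  [AddCommGroup W] [Module ℂ W] [FiniteDimensional ℂ W]
variable {n : ℕ}
variable {A₁ A₂ : V₀ →ₗ[ℂ] V₁} {C : Fin n → (V₁ →ₗ[ℂ] V₀)} {e : V₀ →ₗ[ℂ] W}
  {f : Fin (n - 1) → (W →ₗ[ℂ] V₀)}

/-- The pairing argument: if the column chain has a nonzero `e`-value, then the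
`f`-defect functionals of any row chain vanish. -/
lemma pairing (hn : 2 ≤ n) (hW : finrank ℂ W = 1)
    (hQ1a : ∀ q : Fin (n - 1),
      A₂ ∘ₗ C ⟨q.1 + 1, by have := q.2; omega⟩ = A₁ ∘ₗ C ⟨q.1, by have := q.2; omega⟩)
    (hQ1b : ∀ q : Fin (n - 1),
      C ⟨q.1 + 1, by have := q.2; omega⟩ ∘ₗ A₂ =
        C ⟨q.1, by have := q.2; omega⟩ ∘ₗ A₁ + f q ∘ₗ e)
    (v : ℕ → V₀) (d : ℕ) (hv : IsCol A₁ A₂ v d)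
    (k₀ : ℕ) (hk₀ : e (v k₀) ≠ 0)
    (ρ : ℕ → (V₁ →ₗ[ℂ] ℂ)) (δ : ℕ) (hρ : IsRow A₁ A₂ ρ δ) :
    ∀ (j : ℕ) (x : W), (ρ j) (A₁ (f ⟨n-2, by omega⟩ x)) = 0 := by
  set w₀ : W := e (v k₀) with hw₀
  have hk₀d : k₀ ≤ d := by
    by_contra h
    rw [hw₀, hv.2.2 k₀ (by omega), map_zero] at hk₀
    exact hk₀ rfl
  have hWspan : ∀ u : W, ∃ μ : ℂ, μ • w₀ = u :=
    (finrank_eq_one_iff_of_nonzero' w₀ hk₀).mp hW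
  set fn : W →ₗ[ℂ] V₀ := f ⟨n-2, by omega⟩ with hfn
  set Cn : V₁ →ₗ[ℂ] V₀ := C ⟨n-1, by omega⟩ with hCn
  set Cn' : V₁ →ₗ[ℂ] V₀ := C ⟨n-2, by omega⟩ with hCn'
  set η : ℕ → ℂ := fun k => Classical.choose (hWspan (e (v k))) with hη
  have hηspec : ∀ k, η k • w₀ = e (v k) := fun k => Classical.choose_spec (hWspan (e (v k)))
  set s : ℕ → ℂ := fun j => (ρ j) (A₁ (fn w₀)) with hs
  set G : ℕ → ℕ → ℂ := fun a b => (ρ a) (A₁ (Cn (A₁ (v b)))) with hG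
  -- the fundamental coefficientwise identity
  have hkey : ∀ j k, s j * η k =
      (if j = 0 then 0 else G (j-1) k) - (if k = 0 then 0 else G j (k-1)) := by
    intro j k
    have h1 : s j * η k = (ρ j) (A₁ (fn (e (v k)))) := by
      rw [← hηspec k, map_smul, map_smul, map_smul, smul_eq_mul, hs, mul_comm]
    have h2 : fn (e (v k)) = Cn (A₂ (v k)) - Cn' (A₁ (v k)) := by
      have := rel_ab hn hQ1b (v k)
      rw [← hCn, ← hCn', ← hfn] at this
      rw [this]; abel
    rw [h1, h2, map_sub, map_sub]
    have hterm1 : (ρ j) (A₁ (Cn (A₂ (v k)))) = -(if k = 0 then 0 else G j (k-1)) := by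
      rcases k with _ | b
      · rw [if_pos rfl, hv.1, map_zero, map_zero, map_zero, neg_zero]
      · rw [if_neg (by omega : ¬ b + 1 = 0), Nat.add_sub_cancel]
        rw [hv.2.1 b, map_neg, map_neg, map_neg, hG]
    have hterm2 : (ρ j) (A₁ (Cn' (A₁ (v k)))) = -(if j = 0 then 0 else G (j-1) k) := by
      have haa : A₁ (Cn' (A₁ (v k))) = A₂ (Cn (A₁ (v k))) := by
        rw [hCn, hCn']
        exact (rel_aa hn hQ1a (A₁ (v k))).symm
      rw [haa]
      rcases j with _ | a
      · rw [if_pos rfl, neg_zero]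
        exact LinearMap.congr_fun hρ.1 (Cn (A₁ (v k)))
      · rw [if_neg (by omega : ¬ a + 1 = 0), Nat.add_sub_cancel]
        have := LinearMap.congr_fun (hρ.2.1 a) (Cn (A₁ (v k)))
        simp only [LinearMap.comp_apply, LinearMap.neg_apply] at this
        rw [this, hG]
    rw [hterm1, hterm2]
    ring
  -- telescoping: the product polynomial has all coefficients zero
  have hsum : ∀ mm : ℕ, ∑ j ∈ Finset.range (mm+1), s j * η (mm - j) = 0 := by
    intro mm
    have hterm : ∀ j ∈ Finset.range (mm+1), s j * η (mm - j) =
        (if j = 0 then 0 else G (j-1) (mm-j)) - (if j = mm then 0 else G j (mm-j-1)) := by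
      intro j hj
      rw [Finset.mem_range] at hj
      rw [hkey j (mm - j)]
      congr 1
      by_cases hjm : j = mm
      · rw [if_pos hjm, if_pos (by omega : mm - j = 0)]
      · rw [if_neg hjm, if_neg (by omega : ¬ mm - j = 0)]
    rw [Finset.sum_congr rfl hterm, Finset.sum_sub_distrib]
    have hA : ∑ j ∈ Finset.range (mm+1), (if j = 0 then 0 else G (j-1) (mm-j))
        = ∑ j ∈ Finset.range mm, G j (mm-j-1) := by
      rw [Finset.sum_range_succ']
      simp only [if_pos rfl, if_true, add_zero]
      apply Finset.sum_congr rfl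
      intro j _
      rw [if_neg (by omega : ¬ j + 1 = 0), Nat.add_sub_cancel]
      congr 1
    have hB : ∑ j ∈ Finset.range (mm+1), (if j = mm then 0 else G j (mm-j-1))
        = ∑ j ∈ Finset.range mm, G j (mm-j-1) := by
      rw [Finset.sum_range_succ]
      simp only [if_pos rfl, if_true, add_zero]
      apply Finset.sum_congr rfl
      intro j hj
      rw [Finset.mem_range] at hj
      rw [if_neg (by omega : ¬ j = mm)]
    rw [hA, hB, sub_self]
  -- conclude s = 0 via polynomials
  have hsv : ∀ j, δ < j → s j = 0 := by
    intro j hj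
    rw [hs]
    show (ρ j) (A₁ (fn w₀)) = 0
    rw [hρ.2.2 j hj]
    rfl
  have hηv : ∀ k, d < k → η k = 0 := by
    intro k hk
    have := hηspec k
    rw [hv.2.2 k hk, map_zero] at this
    rcases smul_eq_zero.mp this with h | h
    · exact h
    · exact absurd h hk₀
  set SS : Polynomial ℂ := polyOf (δ+1) s with hSS
  set HH : Polynomial ℂ := polyOf (d+1) η with hHH
  have hSSc : ∀ j, SS.coeff j = s j := by
    intro j
    rw [hSS, polyOf_coeff]
    by_cases h : j < δ + 1
    · rw [if_pos h]
    · rw [if_neg h, hsv j (by omega)]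
  have hHHc : ∀ k, HH.coeff k = η k := by
    intro k
    rw [hHH, polyOf_coeff]
    by_cases h : k < d + 1
    · rw [if_pos h]
    · rw [if_neg h, hηv k (by omega)]
  have hmul : SS * HH = 0 := by
    apply Polynomial.ext
    intro mm
    rw [Polynomial.coeff_mul, Polynomial.coeff_zero]
    rw [Finset.Nat.sum_antidiagonal_eq_sum_range_succ_mk]
    have : ∀ j ∈ Finset.range (mm+1), SS.coeff j * HH.coeff (mm - j) = s j * η (mm - j) := by
      intro j _
      rw [hSSc, hHHc]
    rw [Finset.sum_congr rfl this, hsum]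
  have hHHne : HH ≠ 0 := by
    intro h0
    have := hHHc k₀
    rw [h0, Polynomial.coeff_zero] at this
    have hη0 := hηspec k₀
    rw [← this, zero_smul] at hη0
    exact hk₀ hη0.symm
  have hSS0 : SS = 0 := by
    rcases mul_eq_zero.mp hmul with h | h
    · exact h
    · exact absurd h hHHne
  have hs0 : ∀ j, s j = 0 := by
    intro j
    rw [← hSSc j, hSS0, Polynomial.coeff_zero]
  -- final conclusion
  intro j x
  obtain ⟨μ, hμ⟩ := hWspan x
  rw [← hμ, map_smul, map_smul, map_smul, smul_eq_mul]
  rw [show (ρ j) (A₁ (fn w₀)) = 0 from hs0 j, mul_zero]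

end pairing

section rowcontra
variable {V₀ V₁ W : Type} [AddCommGroup V₀] [Module ℂ V₀] [FiniteDimensional ℂ V₀]
  [AddCommGroup V₁] [Module ℂ V₁] [FiniteDimensional ℂ V₁]
  [AddCommGroup W] [Module ℂ W] [FiniteDimensional ℂ W]
variable {n c : ℕ}
variable {A₁ A₂ : V₀ →ₗ[ℂ] V₁} {C : Fin n → (V₁ →ₗ[ℂ] V₀)} {e : V₀ →ₗ[ℂ] W}
  {f : Fin (n - 1) → (W →ₗ[ℂ] V₀)}

/-- the row-chain case with vanishing `f`-defects leads to a contradiction -/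
lemma row_contra (hn : 2 ≤ n) (hV₀ : finrank ℂ V₀ = c) (hV₁ : finrank ℂ V₁ = c)
    (hQ1a : ∀ q : Fin (n - 1),
      A₂ ∘ₗ C ⟨q.1 + 1, by have := q.2; omega⟩ = A₁ ∘ₗ C ⟨q.1, by have := q.2; omega⟩)
    (hQ1b : ∀ q : Fin (n - 1),
      C ⟨q.1 + 1, by have := q.2; omega⟩ ∘ₗ A₂ =
        C ⟨q.1, by have := q.2; omega⟩ ∘ₗ A₁ + f q ∘ₗ e)
    (hclaim : ∀ (T₀ : Submodule ℂ V₀) (T₁ : Submodule ℂ V₁),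
      T₀.map A₁ ≤ T₁ → T₀.map A₂ ≤ T₁ → (∀ q, T₁.map (C q) ≤ T₀) →
        finrank ℂ T₀ ≤ finrank ℂ T₁)
    (ρ : ℕ → (V₁ →ₗ[ℂ] ℂ)) (δ : ℕ) (hρ : IsRow A₁ A₂ ρ δ) (hρne : ρ ≠ 0)
    (hmin : ∀ (D : ℕ) (w : ℕ → (V₁ →ₗ[ℂ] ℂ)), IsRow A₁ A₂ w D → w ≠ 0 → δ ≤ D)
    (hs0 : ∀ (j : ℕ) (x : W), (ρ j) (A₁ (f ⟨n-2, by omega⟩ x)) = 0) : False := by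
  have htoprow : ∀ k, δ ≤ k → (ρ k).comp A₁ = 0 := IsRow.top hρ
  set Cn : V₁ →ₗ[ℂ] V₀ := C ⟨n-1, by omega⟩ with hCn
  set m : ℕ → (V₁ →ₗ[ℂ] ℂ) := fun j => ((ρ j).comp A₁).comp Cn with hm
  have hkey : ∀ (j : ℕ) (z : V₀), (m j) (A₂ z) = (ρ j) (A₂ (Cn (A₁ z))) := by
    intro j z
    show (ρ j) (A₁ (Cn (A₂ z))) = (ρ j) (A₂ (Cn (A₁ z)))
    have h2 : Cn (A₂ z) = C ⟨n-2, by omega⟩ (A₁ z) + f ⟨n-2, by omega⟩ (e z) :=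
      rel_ab hn hQ1b z
    rw [h2, map_add, map_add, hs0 j (e z), add_zero]
    have h3 : A₂ (Cn (A₁ z)) = A₁ (C ⟨n-2, by omega⟩ (A₁ z)) := rel_aa hn hQ1a (A₁ z)
    rw [h3]
  have hm0 : (m 0).comp A₂ = 0 := by
    apply LinearMap.ext
    intro z
    rw [LinearMap.comp_apply, hkey 0 z]
    have := LinearMap.congr_fun hρ.1 (Cn (A₁ z))
    simpa using this
  have hmstep : ∀ k, (m (k+1)).comp A₂ = - (m k).comp A₁ := by
    intro k
    apply LinearMap.ext
    intro z
    rw [LinearMap.comp_apply, hkey (k+1) z]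
    have h2 := LinearMap.congr_fun (hρ.2.1 k) (Cn (A₁ z))
    simp only [LinearMap.comp_apply, LinearMap.neg_apply] at h2 ⊢
    exact h2
  have hmbound : ∀ k, δ ≤ k → m k = 0 := by
    intro k hk
    rcases Nat.lt_or_ge δ k with h | h
    · rw [hm]
      show ((ρ k).comp A₁).comp Cn = 0
      rw [hρ.2.2 k h, LinearMap.zero_comp, LinearMap.zero_comp]
    · have hkδ : k = δ := by omega
      rw [hm]
      show ((ρ k).comp A₁).comp Cn = 0
      rw [htoprow k (by omega), LinearMap.zero_comp]
  have hmzero : ∀ k, m k = 0 := by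
    by_contra hco
    push_neg at hco
    obtain ⟨k, hk⟩ := hco
    have hkδ : k < δ := by
      by_contra h
      exact hk (hmbound k (by omega))
    have hmne : m ≠ 0 := fun h => hk (congrFun h k)
    have hchain : IsRow A₁ A₂ m (δ-1) :=
      ⟨hm0, hmstep, fun k hk => hmbound k (by omega)⟩
    have := hmin (δ-1) m hchain hmne
    omega
  -- vanishing of all functionals ρ_j ∘ A_i ∘ C_q
  have hvan : ∀ j, (∀ q : Fin n, ∀ y, (ρ j) (A₂ (C q y)) = 0) ∧
      (∀ q : Fin n, ∀ y, (ρ j) (A₁ (C q y)) = 0) := by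
    have hA1part : ∀ j, (∀ q : Fin n, ∀ y, (ρ j) (A₂ (C q y)) = 0) →
        ∀ q : Fin n, ∀ y, (ρ j) (A₁ (C q y)) = 0 := by
      intro j h2 q y
      by_cases hq : q.1 = n - 1
      · have hqe : q = (⟨n-1, by omega⟩ : Fin n) := Fin.ext (by simp only [Fin.val_mk]; omega)
        rw [hqe]
        have h9 := LinearMap.congr_fun (hmzero j) y
        simpa [hm] using h9
      · have hq' : q.1 < n - 1 := by have := q.2; omega
        have h3 := rel_aa' hQ1a q.1 hq' y
        have hqe : (⟨q.1, by omega⟩ : Fin n) = q := Fin.ext rfl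
        rw [hqe] at h3
        rw [← h3]
        exact h2 ⟨q.1+1, by omega⟩ y
    intro j
    induction j with
    | zero =>
      have h2 : ∀ q : Fin n, ∀ y, (ρ 0) (A₂ (C q y)) = 0 := by
        intro q y
        have := LinearMap.congr_fun hρ.1 (C q y)
        simpa using this
      exact ⟨h2, hA1part 0 h2⟩
    | succ k ih =>
      have h2 : ∀ q : Fin n, ∀ y, (ρ (k+1)) (A₂ (C q y)) = 0 := by
        intro q y
        have h3 := LinearMap.congr_fun (hρ.2.1 k) (C q y)
        simp only [LinearMap.comp_apply, LinearMap.neg_apply] at h3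
        rw [h3, ih.2 q y, neg_zero]
      exact ⟨h2, hA1part (k+1) h2⟩
  -- the subrepresentation via dual coannihilators
  set Ξ₁ : Submodule ℂ (Module.Dual ℂ V₁) := Submodule.span ℂ (Set.range ρ) with hΞ₁
  set Ξ₀ : Submodule ℂ (Module.Dual ℂ V₀) :=
    Submodule.span ℂ (Set.range (fun j => (ρ j).comp A₁)) with hΞ₀
  set T₁ : Submodule ℂ V₁ := Ξ₁.dualCoannihilator with hT₁
  set T₀ : Submodule ℂ V₀ := Ξ₀.dualCoannihilator with hT₀
  have hmemT₀ : ∀ x : V₀, x ∈ T₀ ↔ ∀ j, (ρ j) (A₁ x) = 0 := by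
    intro x
    rw [hT₀, Submodule.mem_dualCoannihilator]
    constructor
    · intro h j
      exact h _ (Submodule.subset_span ⟨j, rfl⟩)
    · intro h φ hφ
      induction hφ using Submodule.span_induction with
      | mem ψ hψ => obtain ⟨j, rfl⟩ := hψ; exact h j
      | zero => rfl
      | add ψ χ _ _ h1 h2 => rw [LinearMap.add_apply, h1, h2, add_zero]
      | smul a ψ _ h1 => rw [LinearMap.smul_apply, h1, smul_zero]
  have hmemT₁ : ∀ y : V₁, y ∈ T₁ ↔ ∀ j, (ρ j) y = 0 := by
    intro y
    rw [hT₁, Submodule.mem_dualCoannihilator]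
    constructor
    · intro h j
      exact h _ (Submodule.subset_span ⟨j, rfl⟩)
    · intro h φ hφ
      induction hφ using Submodule.span_induction with
      | mem ψ hψ => obtain ⟨j, rfl⟩ := hψ; exact h j
      | zero => rfl
      | add ψ χ _ _ h1 h2 => rw [LinearMap.add_apply, h1, h2, add_zero]
      | smul a ψ _ h1 => rw [LinearMap.smul_apply, h1, smul_zero]
  have hT0A1 : T₀.map A₁ ≤ T₁ := by
    rintro _ ⟨x, hx, rfl⟩
    rw [hmemT₁]
    intro j
    exact (hmemT₀ x).mp hx j
  have hT0A2 : T₀.map A₂ ≤ T₁ := by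
    rintro _ ⟨x, hx, rfl⟩
    rw [hmemT₁]
    intro j
    rcases j with _ | k
    · have := LinearMap.congr_fun hρ.1 x
      simpa using this
    · have h3 := LinearMap.congr_fun (hρ.2.1 k) x
      simp only [LinearMap.comp_apply, LinearMap.neg_apply] at h3
      rw [h3, (hmemT₀ x).mp hx k, neg_zero]
  have hTC : ∀ q : Fin n, T₁.map (C q) ≤ T₀ := by
    intro q
    rintro _ ⟨y, hy, rfl⟩
    rw [hmemT₀]
    intro j
    exact (hvan j).2 q y
  have hfr := hclaim T₀ T₁ hT0A1 hT0A2 hTC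
  -- dimension comparison
  have hc1 := Subspace.finrank_add_finrank_dualCoannihilator_eq Ξ₁
  have hc0 := Subspace.finrank_add_finrank_dualCoannihilator_eq Ξ₀
  rw [hV₁] at hc1
  rw [hV₀] at hc0
  rw [← hT₁] at hc1
  rw [← hT₀] at hc0
  set P : (Fin (δ+1) → ℂ) →ₗ[ℂ] Module.Dual ℂ V₁ := tupMap (δ+1) ρ with hP
  set Q : (Fin (δ+1) → ℂ) →ₗ[ℂ] Module.Dual ℂ V₀ := A₁.dualMap ∘ₗ P with hQd
  have hrangeP : LinearMap.range P = Ξ₁ := by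
    rw [hP, tupMap_range (δ+1) ρ (fun k hk => hρ.2.2 k (by omega)), hΞ₁]
  have hrangeQ : LinearMap.range Q = Ξ₀ := by
    rw [hQd, LinearMap.range_comp, hrangeP, hΞ₁, hΞ₀, Submodule.map_span]
    congr 1
    ext ψ
    constructor
    · rintro ⟨φ, ⟨j, rfl⟩, rfl⟩
      exact ⟨j, rfl⟩
    · rintro ⟨j, rfl⟩
      exact ⟨ρ j, ⟨j, rfl⟩, rfl⟩
  have hker : LinearMap.ker P ≤ LinearMap.ker Q := by
    intro x hx
    rw [LinearMap.mem_ker] at hx ⊢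
    rw [hQd, LinearMap.comp_apply, hx, map_zero]
  have hwitP : P (Pi.single (⟨δ, by omega⟩ : Fin (δ+1)) 1) ≠ 0 := by
    rw [hP, tupMap_single]
    exact row_min_top ρ δ hρ hρne hmin
  have hwitQ : Q (Pi.single (⟨δ, by omega⟩ : Fin (δ+1)) 1) = 0 := by
    rw [hQd, LinearMap.comp_apply, hP, tupMap_single]
    show A₁.dualMap (ρ δ) = 0
    have : A₁.dualMap (ρ δ) = (ρ δ).comp A₁ := rfl
    rw [this, htoprow δ le_rfl]
  have hdrop := rank_drop P Q hker _ hwitP hwitQ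
  rw [hrangeP, hrangeQ] at hdrop
  omega

end rowcontra

section master
variable {V₀ V₁ W : Type} [AddCommGroup V₀] [Module ℂ V₀] [FiniteDimensional ℂ V₀]
  [AddCommGroup V₁] [Module ℂ V₁] [FiniteDimensional ℂ V₁]
  [AddCommGroup W] [Module ℂ W] [FiniteDimensional ℂ W]
variable {n c : ℕ}
variable {A₁ A₂ : V₀ →ₗ[ℂ] V₁} {C : Fin n → (V₁ →ₗ[ℂ] V₀)} {e : V₀ →ₗ[ℂ] W}
  {f : Fin (n - 1) → (W →ₗ[ℂ] V₀)}

lemma main_ineq (hn : 2 ≤ n) (hc : 1 ≤ c)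
    (hV₀ : finrank ℂ V₀ = c) (hV₁ : finrank ℂ V₁ = c) (hW : finrank ℂ W = 1)
    (hQ1a : ∀ q : Fin (n - 1),
      A₂ ∘ₗ C ⟨q.1 + 1, by have := q.2; omega⟩ = A₁ ∘ₗ C ⟨q.1, by have := q.2; omega⟩)
    (hQ1b : ∀ q : Fin (n - 1),
      C ⟨q.1 + 1, by have := q.2; omega⟩ ∘ₗ A₂ =
        C ⟨q.1, by have := q.2; omega⟩ ∘ₗ A₁ + f q ∘ₗ e)
    (hss : ∀ (S₀ : Submodule ℂ V₀) (S₁ : Submodule ℂ V₁),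
      S₀.map A₁ ≤ S₁ → S₀.map A₂ ≤ S₁ →
      (∀ q : Fin n, S₁.map (C q) ≤ S₀) →
      ((S₀ ≤ LinearMap.ker e →
          (2 * c : ℤ) * (finrank ℂ S₀ : ℤ) + (1 - 2 * c) * (finrank ℂ S₁ : ℤ) ≤ 0) ∧
       ((∀ q, LinearMap.range (f q) ≤ S₀) →
          (2 * c : ℤ) * (finrank ℂ S₀ : ℤ) + (1 - 2 * c) * (finrank ℂ S₁ : ℤ) ≤ c)))
    (S₀ : Submodule ℂ V₀) (S₁ : Submodule ℂ V₁)
    (hA₁ : S₀.map A₁ ≤ S₁) (hA₂ : S₀.map A₂ ≤ S₁) :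
    finrank ℂ S₀ ≤ finrank ℂ S₁ := by
  classical
  have hclaim := claim1 hc hW hQ1b hss
  by_contra hlt
  push_neg at hlt
  -- a nonzero column chain exists
  have hex : ∃ D, ∃ u : ℕ → V₀, IsCol A₁ A₂ u D ∧ u ≠ 0 := by
    set a₁ : S₀ →ₗ[ℂ] S₁ := A₁.restrict (fun x hx => hA₁ (Submodule.mem_map_of_mem hx))
      with ha₁
    set a₂ : S₀ →ₗ[ℂ] S₁ := A₂.restrict (fun x hx => hA₂ (Submodule.mem_map_of_mem hx))
      with ha₂
    obtain ⟨w, ⟨hw0, hwstep, hwbd⟩, hwne⟩ := col_exists_abstract a₁ a₂ hlt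
    refine ⟨finrank ℂ S₁, fun k => (w k : V₀), ⟨?_, ?_, ?_⟩, ?_⟩
    · have : ((a₂ (w 0) : S₁) : V₁) = A₂ ((w 0 : S₀) : V₀) := rfl
      rw [← this, hw0, Submodule.coe_zero]
    · intro k
      have h1 : ((a₂ (w (k+1)) : S₁) : V₁) = A₂ ((w (k+1) : S₀) : V₀) := rfl
      have h2 : ((a₁ (w k) : S₁) : V₁) = A₁ ((w k : S₀) : V₀) := rfl
      rw [← h1, ← h2, hwstep k, Submodule.coe_neg]
    · intro k hk
      show ((w k : S₀) : V₀) = 0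
      rw [hwbd k hk, Submodule.coe_zero]
    · intro h0
      apply hwne
      funext k
      have := congrFun h0 k
      simpa using this
  set d := Nat.find hex with hd
  obtain ⟨vm, hvm, hvmne⟩ := Nat.find_spec hex
  have hmin : ∀ (D : ℕ) (u : ℕ → V₀), IsCol A₁ A₂ u D → u ≠ 0 → d ≤ D :=
    fun D u h hne => Nat.find_le ⟨u, h, hne⟩
  by_cases hη : ∀ k, e (vm k) = 0
  · exact col_contra hn hQ1a hQ1b hclaim vm d hvm hvmne hmin hη
  · push_neg at hη
    obtain ⟨k₀, hk₀⟩ := hη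
    obtain ⟨ρ0, hρ0, hρ0ne⟩ := row_exists hc hV₀ hV₁ vm d hvm hvmne
    have hexr : ∃ D, ∃ u : ℕ → (V₁ →ₗ[ℂ] ℂ), IsRow A₁ A₂ u D ∧ u ≠ 0 :=
      ⟨c - 1, ρ0, hρ0, hρ0ne⟩
    set δ := Nat.find hexr with hδ
    obtain ⟨ρm, hρm, hρmne⟩ := Nat.find_spec hexr
    have hminr : ∀ (D : ℕ) (u : ℕ → (V₁ →ₗ[ℂ] ℂ)), IsRow A₁ A₂ u D → u ≠ 0 → δ ≤ D :=
      fun D u h hne => Nat.find_le ⟨u, h, hne⟩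
    have hs0 := pairing hn hW hQ1a hQ1b vm d hvm k₀ hk₀ ρm δ hρm
    exact row_contra hn hV₀ hV₁ hQ1a hQ1b hclaim ρm δ hρm hρmne hminr hs0

end master

end Stmt5

open Module

/-- (Proposition 4.2) If (A₁,A₂;C₁,…,C_n;e;f₁,…,f_{n−1}) is a θ_c-semistable
(c,c)-dimensional framed representation of Λ_n, then (A₁,A₂) is a θ_c-semistable
(c,c)-dimensional representation of the 2-Kronecker quiver. -/
theorem stmt_5 (n c : ℕ) (hn : 2 ≤ n) (hc : 1 ≤ c)
    (V₀ V₁ W : Type) [AddCommGroup V₀] [Module ℂ V₀] [FiniteDimensional ℂ V₀]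
    [AddCommGroup V₁] [Module ℂ V₁] [FiniteDimensional ℂ V₁]
    [AddCommGroup W] [Module ℂ W] [FiniteDimensional ℂ W]
    (hV₀ : finrank ℂ V₀ = c) (hV₁ : finrank ℂ V₁ = c) (hW : finrank ℂ W = 1)
    (A₁ A₂ : V₀ →ₗ[ℂ] V₁)
    (C : Fin n → (V₁ →ₗ[ℂ] V₀))
    (e : V₀ →ₗ[ℂ] W) (f : Fin (n - 1) → (W →ₗ[ℂ] V₀))
    -- the relations (Q1)
    (hQ1a : ∀ q : Fin (n - 1),
      A₂ ∘ₗ C ⟨q.1 + 1, by have := q.2; omega⟩ = A₁ ∘ₗ C ⟨q.1, by have := q.2; omega⟩)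
    (hQ1b : ∀ q : Fin (n - 1),
      C ⟨q.1 + 1, by have := q.2; omega⟩ ∘ₗ A₂ =
        C ⟨q.1, by have := q.2; omega⟩ ∘ₗ A₁ + f q ∘ₗ e)
    -- θ_c-semistability as a representation of Λ_n
    (hss : ∀ (S₀ : Submodule ℂ V₀) (S₁ : Submodule ℂ V₁),
      S₀.map A₁ ≤ S₁ → S₀.map A₂ ≤ S₁ →
      (∀ q : Fin n, S₁.map (C q) ≤ S₀) →
      ((S₀ ≤ LinearMap.ker e →
          (2 * c : ℤ) * (finrank ℂ S₀ : ℤ) + (1 - 2 * c) * (finrank ℂ S₁ : ℤ) ≤ 0) ∧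
       ((∀ q, LinearMap.range (f q) ≤ S₀) →
          (2 * c : ℤ) * (finrank ℂ S₀ : ℤ) + (1 - 2 * c) * (finrank ℂ S₁ : ℤ) ≤ c))) :
    -- θ_c-semistability of (A₁,A₂) as a representation of the Kronecker quiver
    ∀ (S₀ : Submodule ℂ V₀) (S₁ : Submodule ℂ V₁),
      S₀.map A₁ ≤ S₁ → S₀.map A₂ ≤ S₁ →
      ¬(S₀ = ⊥ ∧ S₁ = ⊥) → ¬(S₀ = ⊤ ∧ S₁ = ⊤) →
      ((2 * c : ℝ) * (finrank ℂ S₀ : ℝ) + (1 - 2 * c) * (finrank ℂ S₁ : ℝ)) /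
        ((finrank ℂ S₀ : ℝ) + (finrank ℂ S₁ : ℝ)) ≤ 1 / 2 := by
  intro S₀ S₁ hA₁ hA₂ hne _
  have key := Stmt5.main_ineq hn hc hV₀ hV₁ hW hQ1a hQ1b hss S₀ S₁ hA₁ hA₂
  have hpos : 0 < finrank ℂ S₀ + finrank ℂ S₁ := by
    by_contra h
    push_neg at h
    have h1 : finrank ℂ S₀ = 0 := by omega
    have h2 : finrank ℂ S₁ = 0 := by omega
    exact hne ⟨Submodule.finrank_eq_zero.mp h1, Submodule.finrank_eq_zero.mp h2⟩
  have hposR : (0:ℝ) < (finrank ℂ S₀ : ℝ) + (finrank ℂ S₁ : ℝ) := by exact_mod_cast hpos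
  rw [div_le_div_iff₀ hposR (by norm_num : (0:ℝ) < 2)]
  have hkeyR : (finrank ℂ S₀ : ℝ) ≤ (finrank ℂ S₁ : ℝ) := by exact_mod_cast key
  have hcR : (1:ℝ) ≤ (c:ℝ) := by exact_mod_cast hc
  nlinarith [mul_nonneg (by linarith : (0:ℝ) ≤ 4*(c:ℝ) - 1)
    (by linarith : (0:ℝ) ≤ (finrank ℂ S₁ : ℝ) - (finrank ℂ S₀ : ℝ))]
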